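/- Suppose R ⪰ 0 and set P_u := [[−2 I_{n₂}, −2 I_{n₂}],[−2 I_{n₂}, −2 I_{n₂}]]. If there exist a symmetric X ∈ ℝ^{n×n} with X ≻ 0 and τ > 0 such that L̃(X, τ) ≺ 0, then the lifted reset closed loop obtained by taking Δ_k = −identity for all k, namely η(k+1) = (Ã − B̃_u C_u) η(k) + B̃ w̃(k), z̃(k) = (C̃ − D̃_u C_u) η(k) + D̃ w̃(k), satisfies quadratic performance specified by P̃: (i) for w̃ ≡ 0 every trajectory satisfies η(k) → 0; (ii) there exists ε > 0 such that for every trajectory with η(0) = 0 and square-summable w̃, the series Σ_k (w̃(k), z̃(k))ᵀ P̃ (w̃(k), z̃(k)) converges and its value is ≤ −ε Σ_k ‖w̃(k)‖². -/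

import Mathlib

open Matrix Filter Topology Kronecker

/-- Trajectories of a discrete-time LTI system
`x(t+1) = 𝒜 x(t) + ℬ u(t)`, `y(t) = 𝒞 x(t) + 𝒟 u(t)`. -/
def IsTraj {St In Out : Type*} [Fintype St] [Fintype In] [Fintype Out]
    (A : Matrix St St ℝ) (B : Matrix St In ℝ) (C : Matrix Out St ℝ) (D : Matrix Out In ℝ)
    (x : ℕ → St → ℝ) (u : ℕ → In → ℝ) (y : ℕ → Out → ℝ) : Prop :=
  ∀ t : ℕ, x (t + 1) = A.mulVec (x t) + B.mulVec (u t) ∧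
    y t = C.mulVec (x t) + D.mulVec (u t)

/-- The system satisfies quadratic performance specified by `Π`. -/
def QuadPerf {St In Out : Type*} [Fintype St] [Fintype In] [Fintype Out]
    (A : Matrix St St ℝ) (B : Matrix St In ℝ) (C : Matrix Out St ℝ) (D : Matrix Out In ℝ)
    (P : Matrix (In ⊕ Out) (In ⊕ Out) ℝ) : Prop :=
  (∀ x : ℕ → St → ℝ, (∀ t : ℕ, x (t + 1) = A.mulVec (x t)) →
      Filter.Tendsto x Filter.atTop (nhds 0)) ∧
  ∃ ε > (0 : ℝ), ∀ x u y, IsTraj A B C D x u y → x 0 = 0 →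
    Summable (fun t => u t ⬝ᵥ u t) →
    ∃ l : ℝ,
      Filter.Tendsto (fun N => ∑ t ∈ Finset.range N,
        Sum.elim (u t) (y t) ⬝ᵥ P.mulVec (Sum.elim (u t) (y t))) Filter.atTop (nhds l) ∧
      l ≤ -ε * ∑' t, u t ⬝ᵥ u t


/-- Lifted input matrix `B̃ = [A^{T-1}B, A^{T-2}B, …, B]`. -/
noncomputable def Btil {St : Type*} [Fintype St] [DecidableEq St] {m : ℕ} (T : ℕ) (A : Matrix St St ℝ)
    (B : Matrix St (Fin m) ℝ) : Matrix St (Fin T × Fin m) ℝ :=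
  Matrix.of fun i p => (A ^ (T - 1 - (p.1 : ℕ)) * B) i p.2

/-- Lifted output matrix `C̃` with block rows `C, CA, …, CA^{T-1}`. -/
noncomputable def Ctil {St : Type*} [Fintype St] [DecidableEq St] {q : ℕ} (T : ℕ) (A : Matrix St St ℝ)
    (C : Matrix (Fin q) St ℝ) : Matrix (Fin T × Fin q) St ℝ :=
  Matrix.of fun p j => (C * A ^ (p.1 : ℕ)) p.2 j

/-- Lifted feedthrough matrix `D̃`, block lower triangular with `(i,j)` block `D` if
`i = j`, `C A^{i-j-1} B` if `i > j`, and `0` if `i < j`. -/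
noncomputable def Dtil {St : Type*} [Fintype St] [DecidableEq St] {m q : ℕ} (T : ℕ) (A : Matrix St St ℝ)
    (B : Matrix St (Fin m) ℝ) (C : Matrix (Fin q) St ℝ)
    (D : Matrix (Fin q) (Fin m) ℝ) : Matrix (Fin T × Fin q) (Fin T × Fin m) ℝ :=
  Matrix.of fun p r =>
    if (p.1 : ℕ) = (r.1 : ℕ) then D p.2 r.2
    else if (r.1 : ℕ) < (p.1 : ℕ) then
      (C * A ^ ((p.1 : ℕ) - (r.1 : ℕ) - 1) * B) p.2 r.2
    else 0

/-- The lifted performance matrix `P̃ = [[I_T ⊗ Q, I_T ⊗ S], [I_T ⊗ Sᵀ, I_T ⊗ R]]`. -/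
noncomputable def Ptil {m q : ℕ} (T : ℕ) (Q : Matrix (Fin m) (Fin m) ℝ)
    (S : Matrix (Fin m) (Fin q) ℝ) (R : Matrix (Fin q) (Fin q) ℝ) :
    Matrix ((Fin T × Fin m) ⊕ (Fin T × Fin q)) ((Fin T × Fin m) ⊕ (Fin T × Fin q)) ℝ :=
  Matrix.fromBlocks ((1 : Matrix (Fin T) (Fin T) ℝ) ⊗ₖ Q)
    ((1 : Matrix (Fin T) (Fin T) ℝ) ⊗ₖ S)
    ((1 : Matrix (Fin T) (Fin T) ℝ) ⊗ₖ Sᵀ)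
    ((1 : Matrix (Fin T) (Fin T) ℝ) ⊗ₖ R)

/-- The uncertainty input matrix `B_u = [0; A_c]`, where `A_c` is the lower-right
(controller) block of `A`. -/
noncomputable def Bu {n₁ n₂ : ℕ} (A : Matrix (Fin n₁ ⊕ Fin n₂) (Fin n₁ ⊕ Fin n₂) ℝ) :
    Matrix (Fin n₁ ⊕ Fin n₂) (Fin n₂) ℝ :=
  Matrix.of fun i j =>
    Sum.elim (fun _ : Fin n₁ => (0 : ℝ)) (fun i₂ => A (Sum.inr i₂) (Sum.inr j)) i

/-- The uncertainty output matrix `C_u = [0, I]` selecting the controller state. -/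
noncomputable def Cu (n₁ n₂ : ℕ) : Matrix (Fin n₂) (Fin n₁ ⊕ Fin n₂) ℝ :=
  Matrix.of fun i j =>
    Sum.elim (fun _ : Fin n₁ => (0 : ℝ)) (fun j₂ => if i = j₂ then 1 else 0) j

/-- The lifted uncertainty input matrix `B̃_u = A^{T-1} B_u`. -/
noncomputable def Butil {n₁ n₂ : ℕ} (T : ℕ)
    (A : Matrix (Fin n₁ ⊕ Fin n₂) (Fin n₁ ⊕ Fin n₂) ℝ) :
    Matrix (Fin n₁ ⊕ Fin n₂) (Fin n₂) ℝ :=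
  A ^ (T - 1) * Bu A

/-- The lifted uncertainty feedthrough matrix `D̃_u` with block rows
`0, C B_u, C A B_u, …, C A^{T-2} B_u`. -/
noncomputable def Dutil {n₁ n₂ q : ℕ} (T : ℕ)
    (A : Matrix (Fin n₁ ⊕ Fin n₂) (Fin n₁ ⊕ Fin n₂) ℝ)
    (C : Matrix (Fin q) (Fin n₁ ⊕ Fin n₂) ℝ) : Matrix (Fin T × Fin q) (Fin n₂) ℝ :=
  Matrix.of fun p j =>
    if (p.1 : ℕ) = 0 then 0 else (C * A ^ ((p.1 : ℕ) - 1) * Bu A) p.2 j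

/-- The robust LMI matrix `L̃(X, τ)` combining the lifted dynamics, the lifted
performance multiplier `P̃`, and the uncertainty multiplier `τ P_u`. -/
noncomputable def Ltil {n₁ n₂ m q : ℕ} (T : ℕ)
    (A : Matrix (Fin n₁ ⊕ Fin n₂) (Fin n₁ ⊕ Fin n₂) ℝ)
    (B : Matrix (Fin n₁ ⊕ Fin n₂) (Fin m) ℝ)
    (C : Matrix (Fin q) (Fin n₁ ⊕ Fin n₂) ℝ) (D : Matrix (Fin q) (Fin m) ℝ)
    (Q : Matrix (Fin m) (Fin m) ℝ) (S : Matrix (Fin m) (Fin q) ℝ)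
    (R : Matrix (Fin q) (Fin q) ℝ)
    (Pu : Matrix (Fin n₂ ⊕ Fin n₂) (Fin n₂ ⊕ Fin n₂) ℝ)
    (X : Matrix (Fin n₁ ⊕ Fin n₂) (Fin n₁ ⊕ Fin n₂) ℝ) (τ : ℝ) :
    Matrix (((Fin n₁ ⊕ Fin n₂)) ⊕ ((Fin T × Fin m) ⊕ Fin n₂))
      (((Fin n₁ ⊕ Fin n₂)) ⊕ ((Fin T × Fin m) ⊕ Fin n₂)) ℝ :=
  (Matrix.fromBlocks (n := Fin n₁ ⊕ Fin n₂) 1 0 (A ^ T) (Matrix.fromCols (Btil T A B) (Butil T A)))ᵀ *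
      Matrix.fromBlocks (-X) 0 0 X *
      Matrix.fromBlocks (n := Fin n₁ ⊕ Fin n₂) 1 0 (A ^ T) (Matrix.fromCols (Btil T A B) (Butil T A))
    + (Matrix.fromBlocks (n := Fin T × Fin m) 0 (Matrix.fromCols 1 0) (Ctil T A C)
        (Matrix.fromCols (Dtil T A B C D) (Dutil T A C)))ᵀ *
      Ptil T Q S R *
      Matrix.fromBlocks (n := Fin T × Fin m) 0 (Matrix.fromCols 1 0) (Ctil T A C)
        (Matrix.fromCols (Dtil T A B C D) (Dutil T A C))
    + (Matrix.fromBlocks (n := Fin n₂) 0 (Matrix.fromCols 0 1) (Cu n₁ n₂) 0)ᵀ *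
      (τ • Pu) *
      Matrix.fromBlocks (n := Fin n₂) 0 (Matrix.fromCols 0 1) (Cu n₁ n₂) 0


lemma dot_self_nonneg {ι : Type*} [Fintype ι] (v : ι → ℝ) : 0 ≤ v ⬝ᵥ v :=
  Finset.sum_nonneg fun i _ => mul_self_nonneg _

lemma sq_le_dot_self {ι : Type*} [Fintype ι] (v : ι → ℝ) (i : ι) : (v i)^2 ≤ v ⬝ᵥ v := by
  rw [sq]
  exact Finset.single_le_sum (fun j _ => mul_self_nonneg (v j)) (Finset.mem_univ i)

lemma cross_bound {ι κ : Type*} [Fintype ι] [Fintype κ] (M : Matrix ι κ ℝ)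
    {δ : ℝ} (hδ : 0 < δ) (a : ι → ℝ) (b : κ → ℝ) :
    |a ⬝ᵥ M *ᵥ b| ≤ ((∑ i, ∑ j, |M i j|) + 1) * (δ * (a ⬝ᵥ a) + δ⁻¹ * (b ⬝ᵥ b)) := by
  set c : ℝ := (∑ i, ∑ j, |M i j|) + 1 with hc
  have hcpos : 0 < c := by
    have : 0 ≤ ∑ i, ∑ j, |M i j| :=
      Finset.sum_nonneg fun i _ => Finset.sum_nonneg fun j _ => abs_nonneg _
    linarith
  have hE : 0 ≤ δ * (a ⬝ᵥ a) + δ⁻¹ * (b ⬝ᵥ b) := by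
    have := dot_self_nonneg a; have := dot_self_nonneg b; positivity
  have step1 : |a ⬝ᵥ M *ᵥ b| ≤ ∑ i, ∑ j, |a i| * |M i j| * |b j| := by
    have : a ⬝ᵥ M *ᵥ b = ∑ i, ∑ j, a i * (M i j * b j) := by
      simp [dotProduct, Matrix.mulVec, Finset.mul_sum]
    rw [this]
    refine (Finset.abs_sum_le_sum_abs _ _).trans ?_
    refine Finset.sum_le_sum fun i _ => ?_
    refine (Finset.abs_sum_le_sum_abs _ _).trans ?_
    refine Finset.sum_le_sum fun j _ => ?_
    rw [abs_mul, abs_mul]; ring_nf; exact le_refl _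
  have step2 : ∀ i j, |a i| * |M i j| * |b j| ≤ |M i j| * (δ * (a ⬝ᵥ a) + δ⁻¹ * (b ⬝ᵥ b)) := by
    intro i j
    have h1 : |a i| * |b j| ≤ δ * (a ⬝ᵥ a) + δ⁻¹ * (b ⬝ᵥ b) := by
      have ha2 : (a i)^2 ≤ a ⬝ᵥ a := sq_le_dot_self a i
      have hb2 : (b j)^2 ≤ b ⬝ᵥ b := sq_le_dot_self b j
      have key : |a i| * |b j| ≤ δ * (a i)^2 + δ⁻¹ * (b j)^2 := by
        have h0 : 0 ≤ δ⁻¹ * (δ * |a i| - |b j|)^2 := by positivity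
        have hx : δ⁻¹ * δ = 1 := inv_mul_cancel₀ hδ.ne'
        have e : δ⁻¹ * (δ * |a i| - |b j|)^2
            = δ * (a i)^2 - 2 * (|a i| * |b j|) + δ⁻¹ * (b j)^2 := by
          have h1 : (δ * |a i| - |b j|)^2
              = δ*δ*(|a i| ^ 2) - 2*δ*(|a i| * |b j|) + |b j|^2 := by ring
          rw [h1, sq_abs, sq_abs]
          have h2 : δ⁻¹ * (δ*δ*((a i)^2) - 2*δ*(|a i| * |b j|) + (b j)^2)
              = (δ⁻¹*δ)*(δ*(a i)^2) - (δ⁻¹*δ)*(2*(|a i| * |b j|)) + δ⁻¹*(b j)^2 := by ring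
          rw [h2, hx]; ring
        rw [e] at h0
        have hab : 0 ≤ |a i| * |b j| := mul_nonneg (abs_nonneg _) (abs_nonneg _)
        linarith
      have : δ * (a i)^2 + δ⁻¹ * (b j)^2 ≤ δ * (a ⬝ᵥ a) + δ⁻¹ * (b ⬝ᵥ b) := by
        have hδi : 0 ≤ δ⁻¹ := le_of_lt (inv_pos.2 hδ)
        nlinarith
      linarith
    calc |a i| * |M i j| * |b j| = |M i j| * (|a i| * |b j|) := by ring
      _ ≤ |M i j| * (δ * (a ⬝ᵥ a) + δ⁻¹ * (b ⬝ᵥ b)) := by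
          exact mul_le_mul_of_nonneg_left h1 (abs_nonneg _)
  calc |a ⬝ᵥ M *ᵥ b| ≤ ∑ i, ∑ j, |a i| * |M i j| * |b j| := step1
    _ ≤ ∑ i, ∑ j, |M i j| * (δ * (a ⬝ᵥ a) + δ⁻¹ * (b ⬝ᵥ b)) :=
        Finset.sum_le_sum fun i _ => Finset.sum_le_sum fun j _ => step2 i j
    _ = (∑ i, ∑ j, |M i j|) * (δ * (a ⬝ᵥ a) + δ⁻¹ * (b ⬝ᵥ b)) := by
        rw [Finset.sum_mul]; exact Finset.sum_congr rfl fun i _ => by rw [Finset.sum_mul]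
    _ ≤ c * (δ * (a ⬝ᵥ a) + δ⁻¹ * (b ⬝ᵥ b)) := by
        apply mul_le_mul_of_nonneg_right _ hE; linarith

lemma quad_abs_bound {ι : Type*} [Fintype ι] (M : Matrix ι ι ℝ) (v : ι → ℝ) :
    |v ⬝ᵥ M *ᵥ v| ≤ 2 * ((∑ i, ∑ j, |M i j|) + 1) * (v ⬝ᵥ v) := by
  have := cross_bound M one_pos v v
  simpa [inv_one] using this.trans (by ring_nf; exact le_refl _)

lemma mulVec_dot_self_bound {ι κ : Type*} [Fintype ι] [Fintype κ] (M : Matrix ι κ ℝ) (v : κ → ℝ) :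
    (M *ᵥ v) ⬝ᵥ (M *ᵥ v) ≤ 4 * ((∑ i, ∑ j, |M i j|) + 1)^2 * (v ⬝ᵥ v) := by
  set c : ℝ := (∑ i, ∑ j, |M i j|) + 1 with hc
  have hcpos : 0 < c := by
    have : 0 ≤ ∑ i, ∑ j, |M i j| :=
      Finset.sum_nonneg fun i _ => Finset.sum_nonneg fun j _ => abs_nonneg _
    linarith
  have h := cross_bound M (show (0:ℝ) < (2*c)⁻¹ by positivity) (M *ᵥ v) v
  have hinv : ((2*c)⁻¹)⁻¹ = 2*c := inv_inv _
  rw [hinv] at h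
  have h2 : (M *ᵥ v) ⬝ᵥ (M *ᵥ v) ≤ c * ((2*c)⁻¹ * ((M *ᵥ v) ⬝ᵥ (M *ᵥ v)) + 2*c*(v ⬝ᵥ v)) :=
    (le_abs_self _).trans h
  have e : c * ((2*c)⁻¹ * ((M *ᵥ v) ⬝ᵥ (M *ᵥ v)) + 2*c*(v ⬝ᵥ v))
      = (1/2) * ((M *ᵥ v) ⬝ᵥ (M *ᵥ v)) + 2*c^2*(v ⬝ᵥ v) := by
    field_simp
  rw [e] at h2
  set P := (M *ᵥ v) ⬝ᵥ (M *ᵥ v) with hP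
  set W := v ⬝ᵥ v with hW
  set y := c^2 * W with hy
  have g1 : (1/2) * P + 2*c^2*W = (1/2)*P + 2*y := by rw [hy]; ring
  have g2 : 4 * c^2 * W = 4*y := by rw [hy]; ring
  rw [g1] at h2
  rw [g2]
  linarith

lemma quadform_continuous {ι : Type*} [Fintype ι] (M : Matrix ι ι ℝ) :
    Continuous (fun v : ι → ℝ => v ⬝ᵥ M *ᵥ v) := by
  have : (fun v : ι → ℝ => v ⬝ᵥ M *ᵥ v)
      = fun v => ∑ i, v i * ∑ j, M i j * v j := by
    funext v; simp [dotProduct, Matrix.mulVec]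
  rw [this]
  refine continuous_finset_sum _ fun i _ => ?_
  exact (continuous_apply i).mul (continuous_finset_sum _ fun j _ =>
    (continuous_const.mul (continuous_apply j)))

lemma quadform_smul {ι : Type*} [Fintype ι] (M : Matrix ι ι ℝ) (c : ℝ) (v : ι → ℝ) :
    (c • v) ⬝ᵥ M *ᵥ (c • v) = c^2 * (v ⬝ᵥ M *ᵥ v) := by
  rw [Matrix.mulVec_smul, smul_dotProduct, dotProduct_smul]
  simp [smul_eq_mul]; ring

lemma posdef_lower_bound {ι : Type*} [Fintype ι] [DecidableEq ι] {M : Matrix ι ι ℝ}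
    (hM : M.PosDef) : ∃ μ > (0:ℝ), ∀ v : ι → ℝ, μ * (v ⬝ᵥ v) ≤ v ⬝ᵥ M *ᵥ v := by
  rcases isEmpty_or_nonempty ι with h | h
  · exact ⟨1, one_pos, fun v => by simp [dotProduct, Finset.univ_eq_empty]⟩
  · -- sphere in sup norm
    have hne : (Metric.sphere (0 : ι → ℝ) 1).Nonempty := by
      refine ⟨(Pi.single (Classical.arbitrary ι) 1 : ι → ℝ), ?_⟩
      rw [Metric.mem_sphere, dist_zero_right, Pi.norm_single]; norm_num
    have hcomp : IsCompact (Metric.sphere (0 : ι → ℝ) 1) := isCompact_sphere _ _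
    obtain ⟨v₀, hv₀mem, hv₀min⟩ := hcomp.exists_isMinOn hne (quadform_continuous M).continuousOn
    have hv₀ : ‖v₀‖ = 1 := by simpa [dist_zero_right] using hv₀mem
    have hv₀ne : v₀ ≠ 0 := by intro h0; rw [h0] at hv₀; simp at hv₀
    set μ₀ : ℝ := v₀ ⬝ᵥ M *ᵥ v₀ with hμ₀
    have hμ₀pos : 0 < μ₀ := by simpa using hM.dotProduct_mulVec_pos hv₀ne
    set n : ℝ := (Fintype.card ι : ℝ) with hnn
    have hcard : (0:ℝ) < n := by
      have := Fintype.card_pos (α := ι)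
      simp only [hnn]; positivity
    refine ⟨μ₀ / n, by positivity, fun v => ?_⟩
    rcases eq_or_ne v 0 with rfl | hv
    · simp [dotProduct]
    · have hn : 0 < ‖v‖ := norm_pos_iff.2 hv
      have hmem : (‖v‖⁻¹ • v) ∈ Metric.sphere (0 : ι → ℝ) 1 := by
        simp [dist_zero_right, norm_smul, abs_of_pos (inv_pos.2 hn), inv_mul_cancel₀ hn.ne']
      have hmin := hv₀min hmem
      have hq : (‖v‖⁻¹ • v) ⬝ᵥ M *ᵥ (‖v‖⁻¹ • v) = (‖v‖⁻¹)^2 * (v ⬝ᵥ M *ᵥ v) :=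
        quadform_smul M _ v
      have h1 : μ₀ ≤ (‖v‖⁻¹)^2 * (v ⬝ᵥ M *ᵥ v) := by rw [← hq]; exact hmin
      have h2 : μ₀ * ‖v‖^2 ≤ v ⬝ᵥ M *ᵥ v := by
        have := mul_le_mul_of_nonneg_left h1 (le_of_lt (by positivity : (0:ℝ) < ‖v‖^2))
        calc μ₀ * ‖v‖^2 = ‖v‖^2 * μ₀ := by ring
          _ ≤ ‖v‖^2 * ((‖v‖⁻¹)^2 * (v ⬝ᵥ M *ᵥ v)) := this
          _ = (‖v‖ * ‖v‖⁻¹)^2 * (v ⬝ᵥ M *ᵥ v) := by ring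
          _ = v ⬝ᵥ M *ᵥ v := by rw [mul_inv_cancel₀ hn.ne']; ring
      have h3 : v ⬝ᵥ v ≤ n * ‖v‖^2 := by
        have : ∀ i, v i * v i ≤ ‖v‖^2 := fun i => by
          have h4 := norm_le_pi_norm v i
          have : |v i| ≤ ‖v‖ := by simpa [Real.norm_eq_abs] using h4
          nlinarith [abs_nonneg (v i), le_abs_self (v i), neg_abs_le (v i)]
        calc v ⬝ᵥ v = ∑ i, v i * v i := rfl
          _ ≤ ∑ _i : ι, ‖v‖^2 := Finset.sum_le_sum fun i _ => this i
          _ = n * ‖v‖^2 := by simp [Finset.sum_const, nsmul_eq_mul, hnn]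
      calc μ₀ / n * (v ⬝ᵥ v) ≤ μ₀ / n * (n * ‖v‖^2) := by
            apply mul_le_mul_of_nonneg_left h3 (by positivity)
        _ = μ₀ * ‖v‖^2 * (n⁻¹ * n) := by ring
        _ = μ₀ * ‖v‖^2 := by rw [inv_mul_cancel₀ hcard.ne']; ring
        _ ≤ v ⬝ᵥ M *ᵥ v := h2

lemma tendsto_zero_of_dot_self {St : Type*} [Fintype St] (x : ℕ → St → ℝ)
    (h : Tendsto (fun t => x t ⬝ᵥ x t) atTop (𝓝 0)) : Tendsto x atTop (𝓝 0) := by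
  rw [tendsto_pi_nhds]
  intro i
  have hsq : Tendsto (fun t => (x t i)^2) atTop (𝓝 0) :=
    squeeze_zero (fun t => sq_nonneg _) (fun t => sq_le_dot_self (x t) i) h
  have habs : Tendsto (fun t => |x t i|) atTop (𝓝 0) := by
    have := (Real.continuous_sqrt.tendsto 0).comp hsq
    have heq : ((fun x => √x) ∘ fun t => x t i ^ 2) = fun t => |x t i| := by
      funext t; simp [Function.comp, Real.sqrt_sq_eq_abs]
    rw [heq] at this
    simpa using this
  have h2 : Tendsto (fun t => -|x t i|) atTop (𝓝 0) := by
    have := habs.neg; simpa using this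
  have : Tendsto (fun t => x t i) atTop (𝓝 0) :=
    tendsto_of_tendsto_of_tendsto_of_le_of_le h2 habs
      (fun t => neg_abs_le (x t i)) (fun t => le_abs_self (x t i))
  simpa using this

lemma lyap_tendsto {St : Type*} [Fintype St] (𝒜 X : Matrix St St ℝ)
    (hXpsd : ∀ v, 0 ≤ v ⬝ᵥ X *ᵥ v) {μ : ℝ} (hμ : 0 < μ)
    (hdec : ∀ ξ, (𝒜 *ᵥ ξ) ⬝ᵥ X *ᵥ (𝒜 *ᵥ ξ) ≤ ξ ⬝ᵥ X *ᵥ ξ - μ * (ξ ⬝ᵥ ξ))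
    (x : ℕ → St → ℝ) (hx : ∀ t, x (t+1) = 𝒜 *ᵥ x t) : Tendsto x atTop (𝓝 0) := by
  set V : ℕ → ℝ := fun t => x t ⬝ᵥ X *ᵥ x t with hV
  set g : ℕ → ℝ := fun t => x t ⬝ᵥ x t with hg
  have hstep : ∀ t, V (t+1) ≤ V t - μ * g t := by
    intro t; simp only [hV, hg, hx t]; exact hdec (x t)
  have hbound : ∀ N, V N + μ * ∑ t ∈ Finset.range N, g t ≤ V 0 := by
    intro N
    induction N with
    | zero => simp
    | succ N ih =>
      rw [Finset.sum_range_succ]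
      have := hstep N
      linarith [ih]
  have hgsum : Summable g := by
    refine summable_of_sum_range_le (c := V 0 / μ) (fun t => dot_self_nonneg _) (fun N => ?_)
    have h1 := hbound N
    have h2 : 0 ≤ V N := hXpsd _
    rw [le_div_iff₀ hμ]
    nlinarith
  exact tendsto_zero_of_dot_self x (hgsum.tendsto_atTop_zero)

lemma state_summable {St In : Type*} [Fintype St] [Fintype In]
    (𝒜 : Matrix St St ℝ) (ℬ : Matrix St In ℝ) (X : Matrix St St ℝ)
    (hXpsd : ∀ v, 0 ≤ v ⬝ᵥ X *ᵥ v) {ν K : ℝ} (hν : 0 < ν) (hK : 0 ≤ K)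
    (hdr : ∀ ξ w, (𝒜 *ᵥ ξ + ℬ *ᵥ w) ⬝ᵥ X *ᵥ (𝒜 *ᵥ ξ + ℬ *ᵥ w)
      ≤ ξ ⬝ᵥ X *ᵥ ξ - ν * (ξ ⬝ᵥ ξ) + K * (w ⬝ᵥ w))
    (x : ℕ → St → ℝ) (u : ℕ → In → ℝ)
    (hx : ∀ t, x (t+1) = 𝒜 *ᵥ x t + ℬ *ᵥ u t) (h0 : x 0 = 0)
    (hu : Summable (fun t => u t ⬝ᵥ u t)) : Summable (fun t => x t ⬝ᵥ x t) := by
  set V : ℕ → ℝ := fun t => x t ⬝ᵥ X *ᵥ x t with hV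
  set g : ℕ → ℝ := fun t => x t ⬝ᵥ x t with hg
  set h : ℕ → ℝ := fun t => u t ⬝ᵥ u t with hh
  have hV0 : V 0 = 0 := by simp [hV, h0]
  have hstep : ∀ t, V (t+1) ≤ V t - ν * g t + K * h t := by
    intro t; simp only [hV, hg, hh, hx t]; exact hdr (x t) (u t)
  have hbound : ∀ N, V N + ν * ∑ t ∈ Finset.range N, g t
      ≤ K * ∑ t ∈ Finset.range N, h t := by
    intro N
    induction N with
    | zero => simp [hV0]
    | succ N ih =>
      rw [Finset.sum_range_succ, Finset.sum_range_succ]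
      have := hstep N
      linarith [ih]
  have hhsum : ∀ N, ∑ t ∈ Finset.range N, h t ≤ ∑' t, h t := fun N =>
    hu.sum_le_tsum _ (fun t _ => dot_self_nonneg _)
  refine summable_of_sum_range_le (c := K * (∑' t, h t) / ν)
    (fun t => dot_self_nonneg _) (fun N => ?_)
  have h1 := hbound N
  have h2 : 0 ≤ V N := hXpsd _
  have h3 : K * ∑ t ∈ Finset.range N, h t ≤ K * ∑' t, h t :=
    mul_le_mul_of_nonneg_left (hhsum N) hK
  rw [le_div_iff₀ hν]
  nlinarith

lemma driven_bound {St In : Type*} [Fintype St] [Fintype In]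
    (𝒜 : Matrix St St ℝ) (ℬ : Matrix St In ℝ) (X : Matrix St St ℝ) {μ : ℝ} (hμ : 0 < μ)
    (hdec : ∀ ξ, (𝒜 *ᵥ ξ) ⬝ᵥ X *ᵥ (𝒜 *ᵥ ξ) ≤ ξ ⬝ᵥ X *ᵥ ξ - μ * (ξ ⬝ᵥ ξ)) :
    ∃ K ≥ (0:ℝ), ∀ ξ w, (𝒜 *ᵥ ξ + ℬ *ᵥ w) ⬝ᵥ X *ᵥ (𝒜 *ᵥ ξ + ℬ *ᵥ w)
      ≤ ξ ⬝ᵥ X *ᵥ ξ - (μ/2) * (ξ ⬝ᵥ ξ) + K * (w ⬝ᵥ w) := by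
  set cX : ℝ := (∑ i, ∑ j, |X i j|) + 1 with hcX
  set cA : ℝ := 4 * ((∑ i, ∑ j, |𝒜 i j|) + 1)^2 with hcA
  set cB : ℝ := 4 * ((∑ i, ∑ j, |ℬ i j|) + 1)^2 with hcB
  have hcXpos : 0 < cX := by
    rw [hcX]
    have : (0:ℝ) ≤ ∑ i, ∑ j, |X i j| :=
      Finset.sum_nonneg fun i _ => Finset.sum_nonneg fun j _ => abs_nonneg _
    linarith
  have hcApos : 0 < cA := by rw [hcA]; positivity
  have hcBpos : 0 < cB := by rw [hcB]; positivity
  set δ : ℝ := μ / (4 * cX * cA) with hδdef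
  have hδpos : 0 < δ := by positivity
  set K : ℝ := (2 * cX * δ⁻¹ + 2 * cX) * cB with hKdef
  have hKnn : 0 ≤ K := by positivity
  refine ⟨K, hKnn, fun ξ w => ?_⟩
  set a : St → ℝ := 𝒜 *ᵥ ξ with ha
  set b : St → ℝ := ℬ *ᵥ w with hb
  have hexp : (a + b) ⬝ᵥ X *ᵥ (a + b)
      = a ⬝ᵥ X *ᵥ a + a ⬝ᵥ X *ᵥ b + b ⬝ᵥ X *ᵥ a + b ⬝ᵥ X *ᵥ b := by
    rw [Matrix.mulVec_add, add_dotProduct, dotProduct_add, dotProduct_add]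
    ring
  have h1 : a ⬝ᵥ X *ᵥ a ≤ ξ ⬝ᵥ X *ᵥ ξ - μ * (ξ ⬝ᵥ ξ) := hdec ξ
  have h2 : a ⬝ᵥ X *ᵥ b ≤ cX * (δ * (a ⬝ᵥ a) + δ⁻¹ * (b ⬝ᵥ b)) :=
    (le_abs_self _).trans (cross_bound X hδpos a b)
  have h3 : b ⬝ᵥ X *ᵥ a ≤ cX * (δ * (a ⬝ᵥ a) + δ⁻¹ * (b ⬝ᵥ b)) := by
    have := (le_abs_self _).trans (cross_bound X (inv_pos.2 hδpos) b a)
    rw [inv_inv] at this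
    calc b ⬝ᵥ X *ᵥ a ≤ cX * (δ⁻¹ * (b ⬝ᵥ b) + δ * (a ⬝ᵥ a)) := this
      _ = cX * (δ * (a ⬝ᵥ a) + δ⁻¹ * (b ⬝ᵥ b)) := by ring
  have h4 : b ⬝ᵥ X *ᵥ b ≤ cX * (1 * (b ⬝ᵥ b) + 1⁻¹ * (b ⬝ᵥ b)) :=
    (le_abs_self _).trans (cross_bound X one_pos b b)
  have ha2 : a ⬝ᵥ a ≤ cA * (ξ ⬝ᵥ ξ) := by
    rw [ha, hcA]; exact mulVec_dot_self_bound 𝒜 ξ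
  have hb2 : b ⬝ᵥ b ≤ cB * (w ⬝ᵥ w) := by
    rw [hb, hcB]; exact mulVec_dot_self_bound ℬ w
  have hδA : 2 * cX * δ * cA = μ / 2 := by
    rw [hδdef]; field_simp; ring
  have hwnn : 0 ≤ w ⬝ᵥ w := dot_self_nonneg _
  have hξnn : 0 ≤ ξ ⬝ᵥ ξ := dot_self_nonneg _
  have hann : 0 ≤ a ⬝ᵥ a := dot_self_nonneg _
  have hbnn : 0 ≤ b ⬝ᵥ b := dot_self_nonneg _
  have key1 : 2 * cX * δ * (a ⬝ᵥ a) ≤ (μ/2) * (ξ ⬝ᵥ ξ) := by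
    calc 2 * cX * δ * (a ⬝ᵥ a) ≤ 2 * cX * δ * (cA * (ξ ⬝ᵥ ξ)) :=
          mul_le_mul_of_nonneg_left ha2 (by positivity)
      _ = (2 * cX * δ * cA) * (ξ ⬝ᵥ ξ) := by ring
      _ = (μ/2) * (ξ ⬝ᵥ ξ) := by rw [hδA]
  have key2 : (2 * cX * δ⁻¹ + 2 * cX) * (b ⬝ᵥ b) ≤ K * (w ⬝ᵥ w) := by
    calc (2 * cX * δ⁻¹ + 2 * cX) * (b ⬝ᵥ b) ≤ (2 * cX * δ⁻¹ + 2 * cX) * (cB * (w ⬝ᵥ w)) :=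
          mul_le_mul_of_nonneg_left hb2 (by positivity)
      _ = K * (w ⬝ᵥ w) := by rw [hKdef]; ring
  rw [hexp]
  have h4' : b ⬝ᵥ X *ᵥ b ≤ 2 * cX * (b ⬝ᵥ b) := by
    calc b ⬝ᵥ X *ᵥ b ≤ cX * (1 * (b ⬝ᵥ b) + 1⁻¹ * (b ⬝ᵥ b)) := h4
      _ = 2 * cX * (b ⬝ᵥ b) := by norm_num; ring
  linarith

lemma quad_conj {ι κ : Type*} [Fintype ι] [Fintype κ] (F : Matrix κ ι ℝ) (N : Matrix κ κ ℝ)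
    (v : ι → ℝ) : v ⬝ᵥ (Fᵀ * N * F) *ᵥ v = (F *ᵥ v) ⬝ᵥ N *ᵥ (F *ᵥ v) := by
  rw [← Matrix.mulVec_mulVec, ← Matrix.mulVec_mulVec, Matrix.dotProduct_mulVec,
    Matrix.vecMul_transpose]

section KeyId
variable {n₁ n₂ m q : ℕ} (T : ℕ)
  (A : Matrix (Fin n₁ ⊕ Fin n₂) (Fin n₁ ⊕ Fin n₂) ℝ)
  (B : Matrix (Fin n₁ ⊕ Fin n₂) (Fin m) ℝ)
  (C : Matrix (Fin q) (Fin n₁ ⊕ Fin n₂) ℝ) (D : Matrix (Fin q) (Fin m) ℝ)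
  (Q : Matrix (Fin m) (Fin m) ℝ) (S : Matrix (Fin m) (Fin q) ℝ)
  (R : Matrix (Fin q) (Fin q) ℝ)
  (X : Matrix (Fin n₁ ⊕ Fin n₂) (Fin n₁ ⊕ Fin n₂) ℝ) (τ : ℝ)

lemma key_identity (ξ : (Fin n₁ ⊕ Fin n₂) → ℝ) (w : Fin T × Fin m → ℝ) :
    (Sum.elim ξ (Sum.elim w (-((Cu n₁ n₂) *ᵥ ξ)))) ⬝ᵥ
      (Ltil T A B C D Q S R (Matrix.fromBlocks ((-2:ℝ)•1) ((-2:ℝ)•1) ((-2:ℝ)•1) ((-2:ℝ)•1)) X τ) *ᵥ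
      (Sum.elim ξ (Sum.elim w (-((Cu n₁ n₂) *ᵥ ξ))))
    = ((A^T - Butil T A * Cu n₁ n₂) *ᵥ ξ + Btil T A B *ᵥ w) ⬝ᵥ
        X *ᵥ ((A^T - Butil T A * Cu n₁ n₂) *ᵥ ξ + Btil T A B *ᵥ w)
      - ξ ⬝ᵥ X *ᵥ ξ
      + (Sum.elim w ((Ctil T A C - Dutil T A C * Cu n₁ n₂) *ᵥ ξ + Dtil T A B C D *ᵥ w)) ⬝ᵥ
          (Ptil T Q S R) *ᵥ
          (Sum.elim w ((Ctil T A C - Dutil T A C * Cu n₁ n₂) *ᵥ ξ + Dtil T A B C D *ᵥ w)) := by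
  set y : Fin n₂ → ℝ := (Cu n₁ n₂) *ᵥ ξ with hy
  set v : ((Fin n₁ ⊕ Fin n₂) ⊕ ((Fin T × Fin m) ⊕ Fin n₂)) → ℝ :=
    Sum.elim ξ (Sum.elim w (-y)) with hv
  set x' : (Fin n₁ ⊕ Fin n₂) → ℝ := (A^T - Butil T A * Cu n₁ n₂) *ᵥ ξ + Btil T A B *ᵥ w with hx'
  set z : (Fin T × Fin q) → ℝ :=
    (Ctil T A C - Dutil T A C * Cu n₁ n₂) *ᵥ ξ + Dtil T A B C D *ᵥ w with hz
  have hvl : v ∘ Sum.inl = ξ := rfl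
  have hvr : v ∘ Sum.inr = Sum.elim w (-y) := rfl
  -- the three outer factors applied to v
  have e1 : A ^ T *ᵥ ξ + (Btil T A B *ᵥ w + Butil T A *ᵥ (-y)) = x' := by
    rw [hx', hy, Matrix.sub_mulVec, ← Matrix.mulVec_mulVec, Matrix.mulVec_neg]
    abel
  have h1 : (Matrix.fromBlocks 1 0 (A ^ T)
      (Matrix.fromCols (Btil T A B) (Butil T A))) *ᵥ v = Sum.elim ξ x' := by
    rw [Matrix.fromBlocks_mulVec, hvl, hvr, Matrix.fromCols_mulVec_sumElim,
      Matrix.one_mulVec, Matrix.zero_mulVec, add_zero, e1]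
  have e2 : Ctil T A C *ᵥ ξ + (Dtil T A B C D *ᵥ w + Dutil T A C *ᵥ (-y)) = z := by
    rw [hz, hy, Matrix.sub_mulVec, ← Matrix.mulVec_mulVec, Matrix.mulVec_neg]
    abel
  have h2 : (Matrix.fromBlocks 0 (Matrix.fromCols 1 0) (Ctil T A C)
      (Matrix.fromCols (Dtil T A B C D) (Dutil T A C))) *ᵥ v = Sum.elim w z := by
    rw [Matrix.fromBlocks_mulVec, hvl, hvr, Matrix.fromCols_mulVec_sumElim,
      Matrix.fromCols_mulVec_sumElim, Matrix.one_mulVec, Matrix.zero_mulVec,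
      Matrix.zero_mulVec, zero_add, add_zero, e2]
  have h3 : (Matrix.fromBlocks 0 (Matrix.fromCols 0 1) (Cu n₁ n₂) 0) *ᵥ v
      = Sum.elim (-y) y := by
    rw [Matrix.fromBlocks_mulVec, hvl, hvr, Matrix.fromCols_mulVec_sumElim,
      Matrix.one_mulVec, Matrix.zero_mulVec, Matrix.zero_mulVec, Matrix.zero_mulVec,
      zero_add, add_zero, zero_add]
  have hthird : (Sum.elim (-y) y) ⬝ᵥ
      ((τ • (Matrix.fromBlocks ((-2:ℝ)•1) ((-2:ℝ)•1) ((-2:ℝ)•1) ((-2:ℝ)•1)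
        : Matrix (Fin n₂ ⊕ Fin n₂) (Fin n₂ ⊕ Fin n₂) ℝ)) *ᵥ (Sum.elim (-y) y)) = 0 := by
    have : (Matrix.fromBlocks ((-2:ℝ)•1) ((-2:ℝ)•1) ((-2:ℝ)•1) ((-2:ℝ)•1)
        : Matrix (Fin n₂ ⊕ Fin n₂) (Fin n₂ ⊕ Fin n₂) ℝ) *ᵥ (Sum.elim (-y) y) = 0 := by
      rw [Matrix.fromBlocks_mulVec]
      simp only [Sum.elim_comp_inl, Sum.elim_comp_inr, Matrix.smul_mulVec,
        Matrix.one_mulVec, Matrix.mulVec_neg]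
      funext i
      cases i <;> simp
    rw [Matrix.smul_mulVec, this]
    simp
  have hfirst : (Sum.elim ξ x') ⬝ᵥ
      ((Matrix.fromBlocks (-X) 0 0 X) *ᵥ (Sum.elim ξ x'))
      = -(ξ ⬝ᵥ X *ᵥ ξ) + x' ⬝ᵥ X *ᵥ x' := by
    rw [Matrix.fromBlocks_mulVec]
    simp only [Sum.elim_comp_inl, Sum.elim_comp_inr, Matrix.zero_mulVec, add_zero, zero_add,
      Matrix.neg_mulVec]
    rw [sumElim_dotProduct_sumElim]
    simp [dotProduct_neg]
  -- main computation
  rw [Ltil, Matrix.add_mulVec, Matrix.add_mulVec, dotProduct_add, dotProduct_add,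
    quad_conj, quad_conj, quad_conj, h1, h2, h3, hfirst, hthird]
  ring
end KeyId

lemma dot_add_add_le {ι : Type*} [Fintype ι] (a b : ι → ℝ) :
    (a + b) ⬝ᵥ (a + b) ≤ 2 * (a ⬝ᵥ a) + 2 * (b ⬝ᵥ b) := by
  have h1 : (a + b) ⬝ᵥ (a + b) = a ⬝ᵥ a + 2 * (a ⬝ᵥ b) + b ⬝ᵥ b := by
    rw [add_dotProduct, dotProduct_add, dotProduct_add, dotProduct_comm b a]; ring
  have h2 : 0 ≤ (a - b) ⬝ᵥ (a - b) := Finset.sum_nonneg fun i _ => mul_self_nonneg _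
  have h3 : (a - b) ⬝ᵥ (a - b) = a ⬝ᵥ a - 2 * (a ⬝ᵥ b) + b ⬝ᵥ b := by
    rw [sub_dotProduct, dotProduct_sub, dotProduct_sub, dotProduct_comm b a]; ring
  linarith

lemma ptil_nonneg {m q : ℕ} (T : ℕ) (Q : Matrix (Fin m) (Fin m) ℝ)
    (S : Matrix (Fin m) (Fin q) ℝ) {R : Matrix (Fin q) (Fin q) ℝ}
    (hRpsd : R.PosSemidef) (z : Fin T × Fin q → ℝ) :
    0 ≤ (Sum.elim (0 : Fin T × Fin m → ℝ) z) ⬝ᵥ (Ptil T Q S R) *ᵥ (Sum.elim 0 z) := by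
  rw [Ptil, Matrix.fromBlocks_mulVec]
  simp only [Sum.elim_comp_inl, Sum.elim_comp_inr, Matrix.mulVec_zero, zero_add]
  rw [sumElim_dotProduct_sumElim, zero_dotProduct, zero_add]
  have heq : z ⬝ᵥ ((1 : Matrix (Fin T) (Fin T) ℝ) ⊗ₖ R) *ᵥ z
      = ∑ i : Fin T, ((fun a => z (i,a)) ⬝ᵥ R *ᵥ (fun a => z (i,a))) := by
    simp only [dotProduct, Matrix.mulVec, Fintype.sum_prod_type,
      Matrix.kroneckerMap_apply, Matrix.one_apply, ite_mul, one_mul, zero_mul,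
      Finset.sum_ite_irrel, Finset.sum_const_zero, Finset.sum_ite_eq, Finset.mem_univ, if_true]
  rw [heq]
  exact Finset.sum_nonneg fun i _ => by
    have := hRpsd.dotProduct_mulVec_nonneg (fun a => z (i,a)); simpa using this

/-- If `R ⪰ 0` and the LMI `L̃(X, τ) ≺ 0` with the reset multiplier
`P_u = [[-2I, -2I], [-2I, -2I]]` is feasible for some symmetric `X ≻ 0` and `τ > 0`,
then the lifted reset closed loop `η(k+1) = (Ã - B̃_u C_u) η(k) + B̃ w̃(k)`,
`z̃(k) = (C̃ - D̃_u C_u) η(k) + D̃ w̃(k)` satisfies quadratic performance specified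
by `P̃`. -/
theorem quadperf_reset_of_LMI {n₁ n₂ m q : ℕ} (T : ℕ) (hT : 1 ≤ T)
    (A : Matrix (Fin n₁ ⊕ Fin n₂) (Fin n₁ ⊕ Fin n₂) ℝ)
    (B : Matrix (Fin n₁ ⊕ Fin n₂) (Fin m) ℝ)
    (C : Matrix (Fin q) (Fin n₁ ⊕ Fin n₂) ℝ) (D : Matrix (Fin q) (Fin m) ℝ)
    (Q : Matrix (Fin m) (Fin m) ℝ) (S : Matrix (Fin m) (Fin q) ℝ)
    (R : Matrix (Fin q) (Fin q) ℝ) (hQ : Q.IsSymm) (hR : R.IsSymm)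
    (hRpsd : R.PosSemidef)
    (hLMI : ∃ (X : Matrix (Fin n₁ ⊕ Fin n₂) (Fin n₁ ⊕ Fin n₂) ℝ) (τ : ℝ),
      X.IsSymm ∧ X.PosDef ∧ 0 < τ ∧
      (-(Ltil T A B C D Q S R
          (Matrix.fromBlocks ((-2 : ℝ) • 1) ((-2 : ℝ) • 1)
            ((-2 : ℝ) • 1) ((-2 : ℝ) • 1)) X τ)).PosDef) :
    QuadPerf (A ^ T - Butil T A * Cu n₁ n₂) (Btil T A B)
      (Ctil T A C - Dutil T A C * Cu n₁ n₂) (Dtil T A B C D) (Ptil T Q S R) := by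
  classical
  obtain ⟨X, τ, hXsymm, hXpd, hτ, hLpd⟩ := hLMI
  obtain ⟨μ, hμpos, hμ⟩ := posdef_lower_bound hLpd
  have hXpsd : ∀ v, 0 ≤ v ⬝ᵥ X *ᵥ v := fun v => by
    have := hXpd.posSemidef.dotProduct_mulVec_nonneg v; simpa using this
  have hL : ∀ v, v ⬝ᵥ (Ltil T A B C D Q S R
      (Matrix.fromBlocks ((-2 : ℝ) • 1) ((-2 : ℝ) • 1) ((-2 : ℝ) • 1) ((-2 : ℝ) • 1)) X τ) *ᵥ v
      ≤ -μ * (v ⬝ᵥ v) := by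
    intro v
    have h := hμ v
    rw [Matrix.neg_mulVec, dotProduct_neg] at h
    linarith
  have hdiss : ∀ (ξ : (Fin n₁ ⊕ Fin n₂) → ℝ) (w : Fin T × Fin m → ℝ),
      ((A ^ T - Butil T A * Cu n₁ n₂) *ᵥ ξ + Btil T A B *ᵥ w) ⬝ᵥ
        X *ᵥ ((A ^ T - Butil T A * Cu n₁ n₂) *ᵥ ξ + Btil T A B *ᵥ w)
      - ξ ⬝ᵥ X *ᵥ ξ
      + (Sum.elim w ((Ctil T A C - Dutil T A C * Cu n₁ n₂) *ᵥ ξ + Dtil T A B C D *ᵥ w)) ⬝ᵥ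
          (Ptil T Q S R) *ᵥ
          (Sum.elim w ((Ctil T A C - Dutil T A C * Cu n₁ n₂) *ᵥ ξ + Dtil T A B C D *ᵥ w))
      ≤ -μ * (ξ ⬝ᵥ ξ + w ⬝ᵥ w) := by
    intro ξ w
    have hLv := hL (Sum.elim ξ (Sum.elim w (-((Cu n₁ n₂) *ᵥ ξ))))
    rw [key_identity T A B C D Q S R X τ ξ w] at hLv
    have hnorm : (Sum.elim ξ (Sum.elim w (-((Cu n₁ n₂) *ᵥ ξ)))) ⬝ᵥ
        (Sum.elim ξ (Sum.elim w (-((Cu n₁ n₂) *ᵥ ξ))))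
        = ξ ⬝ᵥ ξ + (w ⬝ᵥ w + ((Cu n₁ n₂) *ᵥ ξ) ⬝ᵥ ((Cu n₁ n₂) *ᵥ ξ)) := by
      rw [sumElim_dotProduct_sumElim, sumElim_dotProduct_sumElim,
        neg_dotProduct, dotProduct_neg, neg_neg]
    rw [hnorm] at hLv
    have hynn := dot_self_nonneg ((Cu n₁ n₂) *ᵥ ξ)
    nlinarith [mul_nonneg hμpos.le hynn]
  have hdec : ∀ ξ, ((A ^ T - Butil T A * Cu n₁ n₂) *ᵥ ξ) ⬝ᵥ
      X *ᵥ ((A ^ T - Butil T A * Cu n₁ n₂) *ᵥ ξ)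
      ≤ ξ ⬝ᵥ X *ᵥ ξ - μ * (ξ ⬝ᵥ ξ) := by
    intro ξ
    have h := hdiss ξ 0
    simp only [Matrix.mulVec_zero, add_zero, dotProduct_zero, zero_dotProduct] at h
    have hz := ptil_nonneg T Q S hRpsd ((Ctil T A C - Dutil T A C * Cu n₁ n₂) *ᵥ ξ)
    linarith
  constructor
  · intro x hx
    exact lyap_tendsto _ X hXpsd hμpos hdec x hx
  · obtain ⟨K, hK, hdr⟩ := driven_bound _ (Btil T A B) X hμpos hdec
    refine ⟨μ, hμpos, fun x u y htraj h0 hu => ?_⟩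
    have hx : ∀ t, x (t+1) = (A ^ T - Butil T A * Cu n₁ n₂) *ᵥ x t + Btil T A B *ᵥ u t :=
      fun t => (htraj t).1
    have hy : ∀ t, y t = (Ctil T A C - Dutil T A C * Cu n₁ n₂) *ᵥ x t + Dtil T A B C D *ᵥ u t :=
      fun t => (htraj t).2
    have hxsum : Summable (fun t => x t ⬝ᵥ x t) :=
      state_summable _ _ X hXpsd (half_pos hμpos) hK hdr x u hx h0 hu
    have hsbound : ∃ C1 C2 : ℝ, 0 ≤ C1 ∧ 0 ≤ C2 ∧ ∀ t,
        |Sum.elim (u t) (y t) ⬝ᵥ (Ptil T Q S R) *ᵥ (Sum.elim (u t) (y t))|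
          ≤ C1 * (x t ⬝ᵥ x t) + C2 * (u t ⬝ᵥ u t) := by
      set cP : ℝ := 2 * ((∑ i, ∑ j, |(Ptil T Q S R) i j|) + 1) with hcP
      have hcPnn : 0 ≤ cP := by
        rw [hcP]
        have : (0:ℝ) ≤ ∑ i, ∑ j, |(Ptil T Q S R) i j| :=
          Finset.sum_nonneg fun i _ => Finset.sum_nonneg fun j _ => abs_nonneg _
        linarith
      set cC : ℝ := 4 * ((∑ i, ∑ j, |(Ctil T A C - Dutil T A C * Cu n₁ n₂) i j|) + 1)^2 with hcC
      set cD : ℝ := 4 * ((∑ i, ∑ j, |(Dtil T A B C D) i j|) + 1)^2 with hcD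
      have hcCnn : 0 ≤ cC := by rw [hcC]; positivity
      have hcDnn : 0 ≤ cD := by rw [hcD]; positivity
      refine ⟨cP * (2*cC), cP * (1 + 2*cD), by positivity, by positivity, fun t => ?_⟩
      have h1 : |Sum.elim (u t) (y t) ⬝ᵥ (Ptil T Q S R) *ᵥ (Sum.elim (u t) (y t))|
          ≤ cP * (Sum.elim (u t) (y t) ⬝ᵥ Sum.elim (u t) (y t)) := by
        rw [hcP]; exact quad_abs_bound _ _
      have h2 : (Sum.elim (u t) (y t)) ⬝ᵥ (Sum.elim (u t) (y t))
          = u t ⬝ᵥ u t + y t ⬝ᵥ y t := sumElim_dotProduct_sumElim _ _ _ _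
      have h3 : y t ⬝ᵥ y t ≤ 2 * (cC * (x t ⬝ᵥ x t)) + 2 * (cD * (u t ⬝ᵥ u t)) := by
        rw [hy t]
        refine (dot_add_add_le _ _).trans ?_
        have h4 := mulVec_dot_self_bound (Ctil T A C - Dutil T A C * Cu n₁ n₂) (x t)
        have h5 := mulVec_dot_self_bound (Dtil T A B C D) (u t)
        rw [← hcC] at h4
        rw [← hcD] at h5
        linarith
      calc |Sum.elim (u t) (y t) ⬝ᵥ (Ptil T Q S R) *ᵥ (Sum.elim (u t) (y t))|
          ≤ cP * (Sum.elim (u t) (y t) ⬝ᵥ Sum.elim (u t) (y t)) := h1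
        _ = cP * (u t ⬝ᵥ u t + y t ⬝ᵥ y t) := by rw [h2]
        _ ≤ cP * (u t ⬝ᵥ u t + (2 * (cC * (x t ⬝ᵥ x t)) + 2 * (cD * (u t ⬝ᵥ u t)))) :=
            mul_le_mul_of_nonneg_left (by linarith) hcPnn
        _ = cP * (2*cC) * (x t ⬝ᵥ x t) + cP * (1 + 2*cD) * (u t ⬝ᵥ u t) := by ring
    obtain ⟨C1, C2, hC1, hC2, hsb⟩ := hsbound
    have habs_sum : Summable (fun t =>
        |Sum.elim (u t) (y t) ⬝ᵥ (Ptil T Q S R) *ᵥ (Sum.elim (u t) (y t))|) :=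
      Summable.of_nonneg_of_le (fun t => abs_nonneg _) hsb
        ((hxsum.mul_left C1).add (hu.mul_left C2))
    have hssum : Summable (fun t =>
        Sum.elim (u t) (y t) ⬝ᵥ (Ptil T Q S R) *ᵥ (Sum.elim (u t) (y t))) :=
      Summable.of_abs habs_sum
    have hclaim : ∀ N, x N ⬝ᵥ X *ᵥ x N
        + ∑ t ∈ Finset.range N, Sum.elim (u t) (y t) ⬝ᵥ (Ptil T Q S R) *ᵥ (Sum.elim (u t) (y t))
        ≤ -μ * ∑ t ∈ Finset.range N, u t ⬝ᵥ u t := by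
      intro N
      induction N with
      | zero => simp [h0]
      | succ N ih =>
        rw [Finset.sum_range_succ, Finset.sum_range_succ]
        have hd := hdiss (x N) (u N)
        rw [← hx N, ← hy N] at hd
        have hμg : 0 ≤ μ * (x N ⬝ᵥ x N) := mul_nonneg hμpos.le (dot_self_nonneg _)
        nlinarith [ih, hd]
    have hpartial : ∀ N, ∑ t ∈ Finset.range N,
        Sum.elim (u t) (y t) ⬝ᵥ (Ptil T Q S R) *ᵥ (Sum.elim (u t) (y t))
        ≤ -μ * ∑ t ∈ Finset.range N, u t ⬝ᵥ u t := fun N => by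
      have h1 := hclaim N
      have h2 := hXpsd (x N)
      linarith
    refine ⟨∑' t, Sum.elim (u t) (y t) ⬝ᵥ (Ptil T Q S R) *ᵥ (Sum.elim (u t) (y t)),
      hssum.hasSum.tendsto_sum_nat, ?_⟩
    have hlim2 := (hu.hasSum.tendsto_sum_nat).const_mul (-μ)
    exact le_of_tendsto_of_tendsto' hssum.hasSum.tendsto_sum_nat hlim2 hpartial
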